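/- arXiv:2303.08214 — 3 statements merged into one kernel-verified Lean document; each statement's English description precedes it below -/
import Mathlib

section
/- Let H be an even unimodular lattice and e ∈ H primitive isotropic. Every isometry g of H_ℚ that fixes e and acts trivially on (e^⊥/ℤe)_ℚ is of the form E(e∧γ) for some γ ∈ e^⊥_ℚ; moreover g preserves the lattice H if and only if the image of γ in (e^⊥/ℤe)_ℚ lies in e^⊥/ℤe. -/
/-- Let `H` be an even unimodular lattice (here a full lattice `L` in a
rational quadratic space `V = H_ℚ`) and `e ∈ L` primitive isotropic.  Every isometry `g` of
`H_ℚ` that fixes `e` and acts trivially on `(e^⊥/ℤe)_ℚ` is of the form `E(e∧γ)` for some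
`γ ∈ e^⊥_ℚ`; moreover `g` preserves the lattice `H` if and only if the image of `γ` in
`(e^⊥/ℤe)_ℚ` lies in `e^⊥/ℤe` (i.e. `γ` is congruent mod `ℚe` to a lattice vector in
`e^⊥`). -/
theorem rational_isometry_trivial_on_quotient_is_eichler
    (V : Type) [AddCommGroup V] [Module ℚ V]
    (B : V →ₗ[ℚ] V →ₗ[ℚ] ℚ)
    (hsymm : ∀ x y : V, B x y = B y x)
    (hnondeg : ∀ v : V, (∀ x : V, B v x = 0) → v = 0)
    (L : Submodule ℤ V)
    (hfull : Submodule.span ℚ (L : Set V) = ⊤)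
    (n : ℕ) (b : Module.Basis (Fin n) ℤ L)
    (hint : ∀ x ∈ L, ∀ y ∈ L, ∃ k : ℤ, B x y = (k : ℚ))
    (heven : ∀ x ∈ L, ∃ k : ℤ, B x x = 2 * (k : ℚ))
    (hunimod : ∀ v : V, (∀ x ∈ L, ∃ k : ℤ, B v x = (k : ℚ)) → v ∈ L)
    (e : V) (heL : e ∈ L) (he : B e e = 0) (hne : e ≠ 0)
    (hprim : ∀ (c : ℤ), ∀ x ∈ L, e = c • x → IsUnit c)
    (g : V ≃ₗ[ℚ] V)
    (hg : ∀ x y : V, B (g x) (g y) = B x y)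
    (hge : g e = e)
    (htriv : ∀ x : V, B x e = 0 → ∃ c : ℚ, g x = x + c • e) :
    ∃ γ : V, B γ e = 0 ∧
      (∀ x : V, g x =
        x + (B x e) • γ - (B x γ) • e - ((B γ γ / 2) * (B x e)) • e) ∧
      ((∀ x ∈ L, g x ∈ L) ↔ ∃ γ₀ ∈ L, B γ₀ e = 0 ∧ ∃ c : ℚ, γ = γ₀ + c • e) := by
  classical
  -- there is a lattice vector pairing nontrivially with e
  have hex : ∃ x ∈ L, B e x ≠ 0 := by
    by_contra h
    push_neg at h
    refine hne (hnondeg e fun x => ?_)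
    have hle : Submodule.span ℚ (L : Set V) ≤ LinearMap.ker (B e) :=
      Submodule.span_le.mpr fun v hv => by simpa [LinearMap.mem_ker] using h v hv
    have hx : x ∈ Submodule.span ℚ (L : Set V) := by rw [hfull]; trivial
    simpa [LinearMap.mem_ker] using hle hx
  -- the subgroup of values of B e on L
  let S : AddSubgroup ℤ :=
    { carrier := {k : ℤ | ∃ x ∈ L, B e x = (k : ℚ)}
      zero_mem' := ⟨0, L.zero_mem, by simp⟩
      add_mem' := by
        rintro a b ⟨x, hx, hxe⟩ ⟨y, hy, hye⟩
        exact ⟨x + y, L.add_mem hx hy, by rw [map_add, hxe, hye]; push_cast; ring⟩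
      neg_mem' := by
        rintro a ⟨x, hx, hxe⟩
        exact ⟨-x, L.neg_mem hx, by rw [map_neg, hxe]; push_cast; ring⟩ }
  let M : Submodule ℤ ℤ := AddSubgroup.toIntSubmodule S
  obtain ⟨d, hd⟩ : ∃ d : ℤ, M = Submodule.span ℤ {d} :=
    (IsPrincipalIdealRing.principal (M : Ideal ℤ)).principal
  have hmemS : ∀ k : ℤ, (∃ x ∈ L, B e x = (k : ℚ)) ↔ ∃ a : ℤ, a * d = k := by
    intro k
    have h1 : (∃ x ∈ L, B e x = (k : ℚ)) ↔ k ∈ M := Iff.rfl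
    rw [h1, hd, Submodule.mem_span_singleton]
    simp [smul_eq_mul]
  obtain ⟨x₁, hx₁L, hx₁⟩ := hex
  obtain ⟨k₁, hk₁⟩ := hint e heL x₁ hx₁L
  have hk₁0 : k₁ ≠ 0 := by rintro rfl; rw [hk₁] at hx₁; simp at hx₁
  have hd0 : d ≠ 0 := by
    rintro rfl
    obtain ⟨a, ha⟩ := (hmemS k₁).mp ⟨x₁, hx₁L, hk₁⟩
    simp at ha
    exact hk₁0 ha.symm
  have hdQ0 : (d : ℚ) ≠ 0 := Int.cast_ne_zero.mpr hd0
  -- e/d is in L by unimodularity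
  have hvL : ((d : ℚ))⁻¹ • e ∈ L := by
    apply hunimod
    intro x hx
    obtain ⟨m, hm⟩ := hint e heL x hx
    obtain ⟨a, ha⟩ := (hmemS m).mp ⟨x, hx, hm⟩
    refine ⟨a, ?_⟩
    rw [map_smul, LinearMap.smul_apply, smul_eq_mul, hm, ← ha]
    push_cast
    field_simp
  have hdu : IsUnit d := by
    apply hprim d _ hvL
    rw [← Int.cast_smul_eq_zsmul ℚ, smul_smul, mul_inv_cancel₀ hdQ0, one_smul]
  have hd2 : (d : ℚ) * (d : ℚ) = 1 := by
    rcases Int.isUnit_iff.mp hdu with h | h <;> rw [h] <;> norm_num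
  -- a lattice vector f with B e f = 1
  obtain ⟨x₀, hx₀L, hx₀⟩ : ∃ x ∈ L, B e x = (d : ℚ) := by
    have hdM : d ∈ M := by rw [hd]; exact Submodule.mem_span_singleton_self d
    exact hdM
  set f : V := (d : ℚ) • x₀ with hf
  have hfL : f ∈ L := by
    rw [hf, Int.cast_smul_eq_zsmul ℚ]
    exact L.smul_mem d hx₀L
  have hef : B e f = 1 := by rw [hf, map_smul, smul_eq_mul, hx₀, hd2]
  have hfe : B f e = 1 := by rw [hsymm]; exact hef
  -- define γ
  set γ : V := g f - f with hγ
  have h1 : B (g f) e = B f e := by have := hg f e; rwa [hge] at this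
  have hγe : B γ e = 0 := by
    rw [hγ, map_sub, LinearMap.sub_apply, h1, sub_self]
  have heγ : B e γ = 0 := by rw [hsymm]; exact hγe
  have hgf : g f = f + γ := by rw [hγ]; abel
  have hkey : B f γ + B γ γ / 2 = 0 := by
    have h2 : B (g f) (g f) = B f f := hg f f
    rw [hgf] at h2
    simp only [map_add, LinearMap.add_apply] at h2
    have hsγf : B γ f = B f γ := hsymm γ f
    linarith
  have hform : ∀ x : V, g x =
      x + (B x e) • γ - (B x γ) • e - ((B γ γ / 2) * (B x e)) • e := by
    intro x
    set a := B x e with ha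
    set y := x - a • f with hy
    have hxy : x = y + a • f := by rw [hy]; abel
    have hye : B y e = 0 := by
      rw [hy, map_sub, LinearMap.sub_apply, map_smul, LinearMap.smul_apply,
        smul_eq_mul, hfe, ← ha]
      ring
    obtain ⟨c, hgy⟩ := htriv y hye
    have hc : c = - B y γ := by
      have h3 := hg y f
      rw [hgy, hgf] at h3
      simp only [map_add, LinearMap.add_apply, map_smul, LinearMap.smul_apply,
        smul_eq_mul, hef, heγ] at h3
      linarith
    have hgx : g x = (y + c • e) + a • (f + γ) := by
      conv_lhs => rw [hxy]
      rw [map_add, map_smul, hgy, hgf]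
    have hxγ : B x γ = B y γ + a * B f γ := by
      conv_lhs => rw [hxy]
      rw [map_add, LinearMap.add_apply, map_smul, LinearMap.smul_apply, smul_eq_mul]
    have h4 : B γ γ / 2 = - B f γ := by linarith
    rw [hgx, hxγ, hc, h4]
    conv_rhs => rw [hxy]
    module
  refine ⟨γ, hγe, hform, ?_, ?_⟩
  · intro hL
    exact ⟨γ, by rw [hγ]; exact L.sub_mem (hL f hfL) hfL, hγe, 0, by simp⟩
  · rintro ⟨γ₀, hγ₀L, hγ₀e, c, hγc⟩ x hx
    obtain ⟨m₁, hm1⟩ := hint x hx e heL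
    obtain ⟨m₂, hm2⟩ := hint x hx γ₀ hγ₀L
    obtain ⟨m₃, hm3⟩ := heven γ₀ hγ₀L
    have heγ₀ : B e γ₀ = 0 := by rw [hsymm]; exact hγ₀e
    have hγγ : B γ γ = 2 * (m₃ : ℚ) := by
      rw [hγc]
      simp only [map_add, LinearMap.add_apply, map_smul, LinearMap.smul_apply,
        smul_eq_mul, he, hγ₀e, heγ₀, hm3]
      ring
    have hxγ' : B x γ = (m₂ : ℚ) + c * (m₁ : ℚ) := by
      rw [hγc, map_add, LinearMap.map_smul, smul_eq_mul, hm1, hm2]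
    have hgx : g x = x + m₁ • γ₀ + (-m₂ - m₃ * m₁) • e := by
      rw [hform x, hm1, hxγ', hγγ, hγc,
        ← Int.cast_smul_eq_zsmul ℚ (m₁ : ℤ) γ₀,
        ← Int.cast_smul_eq_zsmul ℚ (-m₂ - m₃ * m₁ : ℤ) e]
      push_cast
      match_scalars <;> ring
    rw [hgx]
    exact L.add_mem (L.add_mem hx (L.smul_mem _ hγ₀L)) (L.smul_mem _ heL)
end

section
/- Let H be an even unimodular lattice, e primitive isotropic, and α, α' ∈ e^⊥ with α·α = α'·α' = −2 and α − α' ∈ ℤe. Then there exists γ ∈ e^⊥ with E(e∧γ)(α) = α'. -/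
/-- The Eichler transformation `E(e∧γ)` of an even lattice,
`x ↦ x + (x·e)γ − (x·γ)e − (1/2)(γ·γ)(x·e)e`. -/
def eichler {H : Type} [AddCommGroup H] [Module ℤ H]
    (B : H →ₗ[ℤ] H →ₗ[ℤ] ℤ) (e γ : H) (x : H) : H :=
  x + (B x e) • γ - (B x γ) • e - ((B γ γ / 2) * (B x e)) • e

/-- Module smul and zsmul agree. -/
lemma msmul_eq_zsmul {H : Type} [AddCommGroup H] [Module ℤ H] (m : ℤ) (x : H) :
    @HSMul.hSMul ℤ H H (@instHSMul ℤ H SMulZeroClass.toSMul) m x = m • x := by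
  have := Int.cast_smul_eq_zsmul (R := ℤ) (M := H) m x
  simpa using this

/-- In a unimodular lattice, a primitive vector pairs to 1 with some vector. -/
lemma exists_pair_one {H : Type} [AddCommGroup H] [Module ℤ H]
    (B : H →ₗ[ℤ] H →ₗ[ℤ] ℤ) {n : ℕ} (b : Module.Basis (Fin n) ℤ H)
    (hunimod : IsUnit (Matrix.of fun i j => B (b i) (b j)).det)
    (v : H) (hvprim : ∀ (c : ℤ) (x : H), v = c • x → IsUnit c) :
    ∃ w : H, B v w = 1 := by
  set M : Matrix (Fin n) (Fin n) ℤ := Matrix.of fun i j => B (b i) (b j) with hM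
  haveI : Invertible M := M.invertibleOfIsUnitDet hunimod
  set I : Ideal ℤ := LinearMap.range (B v) with hI
  obtain ⟨d, hd⟩ := (IsPrincipalIdealRing.principal I).principal
  have hdvd : ∀ w : H, d ∣ B v w := by
    intro w
    have : B v w ∈ I := ⟨w, rfl⟩
    rw [hd] at this
    exact Ideal.mem_span_singleton.mp this
  -- coordinates of v
  set c : Fin n → ℤ := fun i => b.repr v i with hc
  have hv : ∑ i, c i • b i = v := by
    have h := b.sum_repr v
    rw [← h]
    refine Finset.sum_congr rfl fun i _ => ?_
    rw [← Int.cast_smul_eq_zsmul ℤ, Int.cast_id]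
  have hvM : ∀ j, Matrix.vecMul c M j = B v (b j) := by
    intro j
    calc Matrix.vecMul c M j = ∑ i, c i * B (b i) (b j) := by
          simp [Matrix.vecMul, dotProduct, hM]
      _ = B v (b j) := by
          rw [← hv]; simp [map_sum, smul_eq_mul]
  have hcoord : ∀ i, d ∣ c i := by
    intro i
    have h1 : Matrix.vecMul (Matrix.vecMul c M) (⅟M) = c := by
      rw [Matrix.vecMul_vecMul, mul_invOf_self, Matrix.vecMul_one]
    have h2 : c i = ∑ j, (Matrix.vecMul c M) j * (⅟M) j i := by
      conv_lhs => rw [← h1]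
      simp [Matrix.vecMul, dotProduct]
    rw [h2]
    refine Finset.dvd_sum fun j _ => Dvd.dvd.mul_right ?_ _
    rw [hvM j]
    exact hdvd _
  -- v = d • x for x the rescaled vector
  choose g hg using hcoord
  have hvdx : v = d • ∑ i, g i • b i := by
    calc v = ∑ i, c i • b i := hv.symm
      _ = ∑ i, (d * g i) • b i := by
          exact Finset.sum_congr rfl fun i _ => by rw [hg i]
      _ = d • ∑ i, g i • b i := by
          simp only [← Int.cast_smul_eq_zsmul ℤ, Int.cast_id]
          rw [Finset.smul_sum]
          exact Finset.sum_congr rfl fun i _ => (@mul_smul ℤ H _ ‹Module ℤ H›.toMulAction.toSemigroupAction _ _ _)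
  have hud : IsUnit d := hvprim d _ hvdx
  obtain ⟨w₀, hw₀⟩ : ∃ w₀, B v w₀ = d := by
    have : d ∈ I := hd ▸ Ideal.subset_span rfl
    exact this
  rcases Int.isUnit_iff.mp hud with h1 | h1
  · exact ⟨w₀, by rw [hw₀, h1]⟩
  · exact ⟨-w₀, by rw [map_neg, hw₀, h1]; ring⟩

/-- A vector of norm −2 in an even lattice is primitive. -/
lemma prim_of_neg_two {H : Type} [AddCommGroup H] [Module ℤ H]
    (B : H →ₗ[ℤ] H →ₗ[ℤ] ℤ) (heven : ∀ x : H, Even (B x x))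
    (v : H) (hv : B v v = -2) :
    ∀ (c : ℤ) (x : H), v = c • x → IsUnit c := by
  intro c x hx
  obtain ⟨t, ht⟩ := heven x
  have h1 : c * (c * (t + t)) = -2 := by
    have h := hv
    rw [hx] at h
    rw [hx, map_zsmul, map_zsmul] at hv
    have : c • (c • B x x) = -2 := hv
    rw [smul_eq_mul, smul_eq_mul, ht] at this
    exact this
  have h2 : c * (-(c * t)) = 1 := by nlinarith [h1]
  exact IsUnit.of_mul_eq_one _ h2

/-- Let `H` be an even unimodular lattice, `e` primitive isotropic, and
`α, α' ∈ e^⊥` with `α·α = α'·α' = −2` and `α − α' ∈ ℤe`.  Then some Eichler transformation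
`E(e∧γ)` with `γ ∈ e^⊥` takes `α` to `α'`. -/
theorem eichler_transitive_on_minus_two_vectors_over_quotient
    (H : Type) [AddCommGroup H] [Module ℤ H]
    (B : H →ₗ[ℤ] H →ₗ[ℤ] ℤ)
    (hsymm : ∀ x y : H, B x y = B y x)
    (heven : ∀ x : H, Even (B x x))
    (n : ℕ) (b : Module.Basis (Fin n) ℤ H)
    (hunimod : IsUnit (Matrix.of fun i j => B (b i) (b j)).det)
    (e : H) (he : B e e = 0) (hne : e ≠ 0)
    (hprim : ∀ (c : ℤ) (x : H), e = c • x → IsUnit c)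
    (α α' : H) (hα : B α α = -2) (hα' : B α' α' = -2)
    (hαe : B α e = 0) (hα'e : B α' e = 0)
    (hdiff : ∃ m : ℤ, α - α' = m • e) :
    ∃ γ : H, B γ e = 0 ∧ eichler B e γ α = α' := by
  obtain ⟨m, hm⟩ := hdiff
  have heα : B e α = 0 := by rw [hsymm]; exact hαe
  -- a vector pairing to 1 with e
  obtain ⟨f, hf⟩ := exists_pair_one B b hunimod e hprim
  set a : ℤ := B α f with ha
  set β : H := α - a • e with hβ
  have hβx : ∀ x : H, B β x = B α x - a * B e x := by
    intro x
    rw [hβ, map_sub, map_zsmul, LinearMap.sub_apply, LinearMap.smul_apply,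
      smul_eq_mul]
  have hβe : B β e = 0 := by rw [hβx, hαe, he]; ring
  have hββ : B β β = -2 := by
    have h1 : B β β = B α β - a * B e β := hβx β
    have h2 : B α β = B α α - a * B α e := by
      rw [hβ, map_sub, map_zsmul, smul_eq_mul]
    have h3 : B e β = B e α - a * B e e := by
      rw [hβ, map_sub, map_zsmul, smul_eq_mul]
    rw [h1, h2, h3, hα, hαe, heα, he]; ring
  have hβprim := prim_of_neg_two B heven β hββ
  obtain ⟨w, hw⟩ := exists_pair_one B b hunimod β hβprim
  set δ : H := w - (B e w) • f with hδ
  have heδ : B e δ = 0 := by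
    rw [hδ, map_sub, map_zsmul, smul_eq_mul, hf]; ring
  have hβf : B β f = 0 := by rw [hβx, hf, ← ha]; ring
  have hβδ : B β δ = 1 := by
    rw [hδ, map_sub, map_zsmul, smul_eq_mul, hβf, hw]; ring
  have hαδ : B α δ = 1 := by
    have h := hβδ
    rw [hβx, heδ] at h
    linarith
  refine ⟨m • δ, ?_, ?_⟩
  · rw [hsymm, map_zsmul, heδ]; simp
  · have hαγ : B α (m • δ) = m := by rw [map_zsmul, hαδ, smul_eq_mul, mul_one]
    have hα'eq : α' = α - m • e := by rw [← hm]; abel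
    rw [eichler, hαe, hαγ, hα'eq]
    simp
end

section
/- Let H be the K3 lattice (even unimodular of signature (3,19)), e primitive isotropic, and let K = {κ ∈ H_ℝ : κ·e > 0, κ·κ = 2}. Then the map κ ↦ κ·e from K to ℝ_{>0} is surjective, and the group H(e)_ℝ acting via real Eichler transformations E(e∧γ) preserves each level set {κ ∈ K : κ·e = c} and acts simply transitively on it; i.e., K is an H(e)_ℝ-torsor over ℝ_{>0}. -/
/-- The real Eichler transformation `E(e∧γ)` on `H_ℝ`:
`κ ↦ κ + (κ·e)γ − (κ·γ)e − (1/2)(γ·γ)(κ·e)e`. -/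
noncomputable def eichlerR {V : Type} [AddCommGroup V] [Module ℝ V]
    (B : V →ₗ[ℝ] V →ₗ[ℝ] ℝ) (e γ : V) (κ : V) : V :=
  κ + (B κ e) • γ - (B κ γ) • e - ((B γ γ / 2) * (B κ e)) • e

/-- Let `H_ℝ` have signature `(3,19)` and `e` be isotropic and nonzero, and
let `K = {κ : κ·e > 0, κ·κ = 2}`.  Then `κ ↦ κ·e` maps `K` onto `ℝ_{>0}`, the real Eichler
transformations `E(e∧γ)` (`γ ∈ e^⊥_ℝ`) preserve each level set `{κ ∈ K : κ·e = c}`, act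
transitively on it, and act on it with stabilizer `ℝe`; i.e. `K` is an
`H(e)_ℝ = e^⊥_ℝ/ℝe`-torsor over `ℝ_{>0}`. -/
theorem K_is_torsor_over_positive_reals
    (V : Type) [AddCommGroup V] [Module ℝ V]
    (B : V →ₗ[ℝ] V →ₗ[ℝ] ℝ)
    (hsymm : ∀ x y : V, B x y = B y x)
    (b : Module.Basis (Fin 22) ℝ V)
    (hb : ∀ i j, B (b i) (b j) =
      if i = j then (if (i : ℕ) < 3 then (1 : ℝ) else -1) else 0)
    (e : V) (he : B e e = 0) (hne : e ≠ 0) :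
    (∀ c : ℝ, 0 < c → ∃ κ : V, B κ e = c ∧ B κ κ = 2) ∧
    (∀ γ : V, B γ e = 0 → ∀ κ : V,
      B (eichlerR B e γ κ) e = B κ e ∧ B (eichlerR B e γ κ) (eichlerR B e γ κ) = B κ κ) ∧
    (∀ κ κ' : V, B κ κ = 2 → B κ' κ' = 2 → 0 < B κ e → B κ e = B κ' e →
      ∃ γ : V, B γ e = 0 ∧ eichlerR B e γ κ = κ') ∧
    (∀ γ : V, B γ e = 0 → ∀ κ : V, B κ κ = 2 → 0 < B κ e →
      eichlerR B e γ κ = κ → ∃ c : ℝ, γ = c • e) := by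
  -- find f with B f e = 1
  obtain ⟨i, hi⟩ : ∃ i, b.repr e i ≠ 0 := by
    by_contra h
    push_neg at h
    exact hne (b.repr.map_eq_zero_iff.mp (Finsupp.ext h))
  have hBie : B (b i) e = (if (i : ℕ) < 3 then (1 : ℝ) else -1) * b.repr e i := by
    conv_lhs => rw [← b.sum_repr e]
    rw [map_sum]
    rw [Finset.sum_eq_single i]
    · rw [map_smul, hb i i]; simp [smul_eq_mul]
    · intro j _ hj
      rw [map_smul, hb i j, if_neg (fun h => hj h.symm)]
      simp
    · intro h; exact absurd (Finset.mem_univ i) h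
  have hd : B (b i) e ≠ 0 := by
    rw [hBie]
    rcases lt_or_ge (i : ℕ) 3 with h | h
    · simp [h, hi]
    · simp [not_lt.mpr h, hi]
  set f : V := (B (b i) e)⁻¹ • b i with hf
  have hfe : B f e = 1 := by
    rw [hf, map_smul, LinearMap.smul_apply, smul_eq_mul, inv_mul_cancel₀ hd]
  refine ⟨?_, ?_, ?_, ?_⟩
  · -- surjectivity
    intro c hc
    have hcne : c ≠ 0 := ne_of_gt hc
    refine ⟨c • f + ((2 - c ^ 2 * B f f) / (2 * c)) • e, ?_, ?_⟩
    · simp only [map_add, map_smul, LinearMap.add_apply, LinearMap.smul_apply,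
        smul_eq_mul, hfe, he]
      ring
    · simp only [map_add, map_smul, LinearMap.add_apply, LinearMap.smul_apply,
        smul_eq_mul, hfe, he, hsymm e f]
      field_simp
      ring
  · -- invariance
    intro γ hγe κ
    have h1 : B e γ = 0 := (hsymm e γ).trans hγe
    constructor
    · simp only [eichlerR, map_add, map_sub, map_smul, LinearMap.add_apply,
        LinearMap.sub_apply, LinearMap.smul_apply, smul_eq_mul, hγe, he]
      ring
    · simp only [eichlerR, map_add, map_sub, map_smul, LinearMap.add_apply,
        LinearMap.sub_apply, LinearMap.smul_apply, smul_eq_mul, hγe, he, h1,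
        hsymm γ κ, hsymm e κ]
      ring
  · -- transitivity
    intro κ κ' hκ hκ' hpos heq
    have hane : B κ e ≠ 0 := ne_of_gt hpos
    set γ : V := (B κ e)⁻¹ • (κ' - κ) with hγ
    have hγe : B γ e = 0 := by
      rw [hγ, map_smul, map_sub, LinearMap.smul_apply, LinearMap.sub_apply,
        smul_eq_mul, ← heq]
      ring
    refine ⟨γ, hγe, ?_⟩
    have h1 : (B κ e) • γ = κ' - κ := by
      rw [hγ, smul_smul, mul_inv_cancel₀ hane, one_smul]
    have hκγ : B κ γ = (B κ e)⁻¹ * (B κ κ' - 2) := by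
      rw [hγ, map_smul, map_sub, smul_eq_mul, hκ]
    have hγγ : B γ γ = (B κ e)⁻¹ * (B κ e)⁻¹ * (4 - 2 * B κ κ') := by
      rw [hγ]
      simp only [map_smul, map_sub, LinearMap.smul_apply, LinearMap.sub_apply,
        smul_eq_mul, hκ, hκ', hsymm κ' κ]
      ring
    have hs : B κ γ + B γ γ / 2 * B κ e = 0 := by
      rw [hκγ, hγγ]
      field_simp
      ring
    rw [eichlerR, h1, sub_sub, ← add_smul, hs, zero_smul, sub_zero]
    abel
  · -- stabilizer
    intro γ hγe κ hκ hpos hfix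
    have hane : B κ e ≠ 0 := ne_of_gt hpos
    refine ⟨(B κ e)⁻¹ * (B κ γ + B γ γ / 2 * B κ e), ?_⟩
    have h3 : (B κ e) • γ = (B κ γ + B γ γ / 2 * B κ e) • e := by
      rw [eichlerR] at hfix
      rw [add_smul]
      linear_combination (norm := module) hfix
    calc γ = (B κ e)⁻¹ • ((B κ e) • γ) := by
            rw [smul_smul, inv_mul_cancel₀ hane, one_smul]
      _ = ((B κ e)⁻¹ * (B κ γ + B γ γ / 2 * B κ e)) • e := by
            rw [h3, smul_smul]
end
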